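/- Fix i ∈ I and suppose G(λ) < ∞. Then the stationary probability that class i is idle satisfies ψ_i = (1 − ρ_i) · ( ∑_{k∈K} μ_k / ψ_{|−k,i} ) / ( ∑_{k∈K} μ_k / ψ_{|−k} ), where ψ_i = ψ · ∑_{x : x_i = 0} Φ(x) λ^x, ρ_i = λ_i / ( M(K) − Λ(I ∖ {i}) ), and ψ_{|−k,i} = 1/G(λ') with λ' agreeing with λ except that λ'_j = 0 for all j ∈ I_k ∪ {i}. (In particular M(K) − Λ(I∖{i}) > 0, so ρ_i is well defined.) -/

import Mathlib

open scoped BigOperators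

/-- The balance function of balanced fairness: `Φ(0) = 1` and
`Φ(x) = (∑_{i : x_i > 0} Φ(x - e_i)) / M(⋃_{i : x_i > 0} 𝒦_i)`. -/
noncomputable def Phi {I K : Type} [Fintype I] [DecidableEq I] [DecidableEq K]
    (μ : K → ℝ) (Ka : I → Finset K) (x : I → ℕ) : ℝ :=
  if x = fun _ => 0 then 1
  else (∑ i ∈ (Finset.univ.filter (fun i => 0 < x i)).attach,
      Phi μ Ka (Function.update x i.1 (x i.1 - 1))) /
    (∑ k ∈ (Finset.univ.filter (fun i => 0 < x i)).biUnion Ka, μ k)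
termination_by ∑ i, x i
decreasing_by
  have hi := i.2
  simp only [Finset.mem_filter] at hi
  apply Finset.sum_lt_sum
  · intro j _
    rcases eq_or_ne j i.1 with rfl | h
    · simp [Function.update_self]
    · rw [Function.update_of_ne h]
  · exact ⟨i.1, Finset.mem_univ i.1, by simp [Function.update_self]; omega⟩

/-- The normalization series `G(λ) = ∑_{x∈ℕ^I} Φ(x) λ^x` (as a real tsum). -/
noncomputable def Gf {I K : Type} [Fintype I] [DecidableEq I] [DecidableEq K]
    (μ : K → ℝ) (Ka : I → Finset K) (lam : I → ℝ) : ℝ :=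
  ∑' x : I → ℕ, Phi μ Ka x * ∏ i, lam i ^ x i

/-- Arrival rates of the system with all traffic of classes assigned to server `k` removed. -/
def lamMinus {I K : Type} [DecidableEq K] (Ka : I → Finset K) (lam : I → ℝ) (k : K) :
    I → ℝ :=
  fun i => if k ∈ Ka i then 0 else lam i

/-- Arrival rates with the traffic of class `i` and of all classes assigned to server `k`
removed. -/
def lamMinusKI {I K : Type} [DecidableEq I] [DecidableEq K]
    (Ka : I → Finset K) (lam : I → ℝ) (k : K) (i : I) : I → ℝ :=
  fun j => if k ∈ Ka j ∨ j = i then 0 else lam j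

section Aux
set_option linter.unusedSectionVars false
variable {I K : Type} [Fintype I] [DecidableEq I] [DecidableEq K]

lemma sum_update_sub_lt (x : I → ℕ) (i : I) (h : 0 < x i) :
    ∑ j, Function.update x i (x i - 1) j < ∑ j, x j := by
  apply Finset.sum_lt_sum
  · intro j _
    rcases eq_or_ne j i with rfl | hne
    · simp only [Function.update_self]; omega
    · rw [Function.update_of_ne hne]
  · exact ⟨i, Finset.mem_univ i, by simp only [Function.update_self]; omega⟩

lemma Phi_nonneg (μ : K → ℝ) (hμ : ∀ k, 0 ≤ μ k) (Ka : I → Finset K) :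
    ∀ x : I → ℕ, 0 ≤ Phi μ Ka x := by
  suffices H : ∀ n (x : I → ℕ), ∑ j, x j = n → 0 ≤ Phi μ Ka x from fun x => H _ x rfl
  intro n
  induction n using Nat.strong_induction_on with
  | _ n ih =>
    intro x hn
    rw [Phi]
    split
    · exact zero_le_one
    · refine div_nonneg (Finset.sum_nonneg fun j _ => ?_) (Finset.sum_nonneg fun k _ => hμ k)
      have hj : 0 < x j.1 := by
        have := j.2; simp only [Finset.mem_filter] at this; exact this.2
      exact ih _ (by rw [← hn]; exact sum_update_sub_lt x j.1 hj) _ rfl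

lemma Phi_zero (μ : K → ℝ) (Ka : I → Finset K) : Phi μ Ka (fun _ => 0) = 1 := by
  rw [Phi]; simp

lemma denom_pos (μ : K → ℝ) (hμ : ∀ k, 0 < μ k) (Ka : I → Finset K)
    (hKa : ∀ i, (Ka i).Nonempty) (x : I → ℕ) (hx : x ≠ fun _ => 0) :
    0 < ∑ k ∈ (Finset.univ.filter fun i => 0 < x i).biUnion Ka, μ k := by
  obtain ⟨i, hi⟩ := Function.ne_iff.1 hx
  obtain ⟨k, hk⟩ := hKa i
  exact Finset.sum_pos (fun k _ => hμ k) ⟨k, Finset.mem_biUnion.2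
    ⟨i, Finset.mem_filter.2 ⟨Finset.mem_univ i, Nat.pos_of_ne_zero hi⟩, hk⟩⟩

/-- The fundamental recursion: `∑_{j : x_j>0} Φ(x-e_j) = Φ(x) · M(𝒦(x))`, valid for all x. -/
lemma Phi_rec (μ : K → ℝ) (hμ : ∀ k, 0 < μ k) (Ka : I → Finset K)
    (hKa : ∀ i, (Ka i).Nonempty) (x : I → ℕ) :
    ∑ j ∈ Finset.univ.filter (fun i => 0 < x i), Phi μ Ka (Function.update x j (x j - 1))
      = Phi μ Ka x * ∑ k ∈ (Finset.univ.filter fun i => 0 < x i).biUnion Ka, μ k := by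
  by_cases hx : x = fun _ => 0
  · subst hx
    simp
  · rw [← Finset.sum_attach (Finset.univ.filter (fun i => 0 < x i))
      (fun j => Phi μ Ka (Function.update x j (x j - 1)))]
    rw [Phi, if_neg hx, div_mul_cancel₀]
    exact (denom_pos μ hμ Ka hKa x hx).ne'

end Aux

section Key
set_option linter.unusedSectionVars false
set_option maxHeartbeats 1000000
variable {I K : Type} [Fintype I] [DecidableEq I] [DecidableEq K]

lemma summable_mono (μ : K → ℝ) (hμ : ∀ k, 0 ≤ μ k) (Ka : I → Finset K)
    (lam lam' : I → ℝ) (h0 : ∀ j, 0 ≤ lam' j) (hle : ∀ j, lam' j ≤ lam j)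
    (hs : Summable fun x : I → ℕ => Phi μ Ka x * ∏ j, lam j ^ x j) :
    Summable fun x : I → ℕ => Phi μ Ka x * ∏ j, lam' j ^ x j := by
  refine hs.of_nonneg_of_le (fun x => mul_nonneg (Phi_nonneg μ hμ Ka x)
    (Finset.prod_nonneg fun j _ => pow_nonneg (h0 j) _)) (fun x => ?_)
  refine mul_le_mul_of_nonneg_left ?_ (Phi_nonneg μ hμ Ka x)
  exact Finset.prod_le_prod (fun j _ => pow_nonneg (h0 j) _)
    (fun j _ => pow_le_pow_left₀ (h0 j) (hle j) _)

lemma prod_pow_update (lam : I → ℝ) (x : I → ℕ) (j : I) (b : ℕ) :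
    ∏ t, lam t ^ (Function.update x j b t)
      = lam j ^ b * ∏ t ∈ Finset.univ.erase j, lam t ^ x t := by
  rw [← Finset.mul_prod_erase _ _ (Finset.mem_univ j), Function.update_self]
  congr 1
  exact Finset.prod_congr rfl fun t ht =>
    by rw [Function.update_of_ne (Finset.ne_of_mem_erase ht)]

/-- `x ↦ x + e_j` as an equivalence onto `{y | 0 < y j}`. -/
def succEquiv (j : I) : (I → ℕ) ≃ {y : I → ℕ | 0 < y j} where
  toFun x := ⟨Function.update x j (x j + 1), by simp⟩
  invFun y := Function.update y.1 j (y.1 j - 1)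
  left_inv x := by
    simp only [Function.update_self, Function.update_idem, Nat.add_sub_cancel,
      Function.update_eq_self]
  right_inv y := Subtype.ext (by
    simp only [Function.update_self, Function.update_idem]
    rw [Nat.sub_add_cancel y.2, Function.update_eq_self])

/-- The key identity: `(M(K) - Λ(I)) · G(λ) = ∑_k μ_k · G(λ_{|-k})`. -/
lemma key_identity [Fintype K] (μ : K → ℝ) (hμ : ∀ k, 0 < μ k)
    (Ka : I → Finset K) (hKa : ∀ i, (Ka i).Nonempty)
    (lam : I → ℝ) (hlam : ∀ j, 0 ≤ lam j)
    (hs : Summable fun x : I → ℕ => Phi μ Ka x * ∏ j, lam j ^ x j) :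
    ((∑ k, μ k) - ∑ j, lam j) * Gf μ Ka lam
      = ∑ k, μ k * Gf μ Ka (lamMinus Ka lam k) := by
  set f : (I → ℕ) → ℝ := fun x => Phi μ Ka x * ∏ j, lam j ^ x j with hf
  have hΦ := Phi_nonneg μ (fun k => (hμ k).le) Ka
  have hf0 : ∀ x, 0 ≤ f x := fun x => mul_nonneg (hΦ x)
    (Finset.prod_nonneg fun j _ => pow_nonneg (hlam j) _)
  -- the family with server k removed
  set fk : K → (I → ℕ) → ℝ :=
    fun k x => Phi μ Ka x * ∏ j, (lamMinus Ka lam k j) ^ x j with hfk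
  have hfk_eq : ∀ k x, fk k x =
      if k ∈ (Finset.univ.filter fun i => 0 < x i).biUnion Ka then 0 else f x := by
    intro k x
    by_cases hk : k ∈ (Finset.univ.filter fun i => 0 < x i).biUnion Ka
    · rw [if_pos hk]
      obtain ⟨j, hj, hkj⟩ := Finset.mem_biUnion.1 hk
      have hj' : 0 < x j := (Finset.mem_filter.1 hj).2
      have hz : (∏ t, (lamMinus Ka lam k t) ^ x t) = 0 := by
        apply Finset.prod_eq_zero (Finset.mem_univ j)
        simp only [lamMinus, if_pos hkj]
        exact zero_pow hj'.ne'
      show Phi μ Ka x * ∏ t, (lamMinus Ka lam k t) ^ x t = 0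
      rw [hz, mul_zero]
    · rw [if_neg hk]
      show Phi μ Ka x * ∏ t, (lamMinus Ka lam k t) ^ x t
        = Phi μ Ka x * ∏ t, lam t ^ x t
      congr 1
      refine Finset.prod_congr rfl fun t _ => ?_
      by_cases hxt : 0 < x t
      · have hkt : k ∉ Ka t := fun h => hk (Finset.mem_biUnion.2
          ⟨t, Finset.mem_filter.2 ⟨Finset.mem_univ t, hxt⟩, h⟩)
        simp only [lamMinus, if_neg hkt]
      · have hx0 : x t = 0 := by omega
        rw [hx0, pow_zero, pow_zero]
  have hfk_sum : ∀ k, Summable (fk k) := by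
    intro k
    refine summable_mono μ (fun k => (hμ k).le) Ka lam (lamMinus Ka lam k)
      (fun j => ?_) (fun j => ?_) hs
    · simp only [lamMinus]; split
      · exact le_refl 0
      · exact hlam j
    · simp only [lamMinus]; split
      · exact hlam j
      · exact le_refl _
  -- M(K)·G − ∑ μ_k G_{-k} = ∑' x, M(𝒦(x)) f(x)
  have hT1 : (∑ k, μ k) * Gf μ Ka lam - ∑ k, μ k * Gf μ Ka (lamMinus Ka lam k)
      = ∑' x, (∑ k ∈ (Finset.univ.filter fun i => 0 < x i).biUnion Ka, μ k) * f x := by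
    rw [Finset.sum_mul, ← Finset.sum_sub_distrib]
    have hdiff : ∀ k : K, μ k * Gf μ Ka lam - μ k * Gf μ Ka (lamMinus Ka lam k)
        = ∑' x, μ k * (f x - fk k x) := by
      intro k
      rw [tsum_mul_left, Summable.tsum_sub hs (hfk_sum k), mul_sub]
      rfl
    rw [Finset.sum_congr rfl fun k _ => hdiff k,
      ← Summable.tsum_finsetSum (fun k (_ : k ∈ Finset.univ) => ((hs.sub (hfk_sum k)).mul_left (μ k)))]
    apply tsum_congr
    intro x
    rw [Finset.sum_mul]
    calc ∑ k, μ k * (f x - fk k x)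
        = ∑ k, if k ∈ (Finset.univ.filter fun i => 0 < x i).biUnion Ka
            then μ k * f x else 0 := by
          refine Finset.sum_congr rfl fun k _ => ?_
          rw [hfk_eq]; split <;> ring
      _ = ∑ k ∈ (Finset.univ.filter fun i => 0 < x i).biUnion Ka, μ k * f x := by
          rw [Finset.sum_ite_mem, Finset.univ_inter]
  -- the shifted summands
  set h : I → (I → ℕ) → ℝ := fun j y =>
    (if 0 < y j then Phi μ Ka (Function.update y j (y j - 1)) else 0)
      * ∏ t, lam t ^ y t with hh
  have hcomp : ∀ (j : I) (x : I → ℕ),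
      h j ((succEquiv j x : {y : I → ℕ | 0 < y j}) : I → ℕ) = lam j * f x := by
    intro j x
    show (if 0 < Function.update x j (x j + 1) j then
        Phi μ Ka (Function.update (Function.update x j (x j + 1)) j
          (Function.update x j (x j + 1) j - 1)) else 0)
      * ∏ t, lam t ^ (Function.update x j (x j + 1) t)
      = lam j * (Phi μ Ka x * ∏ t, lam t ^ x t)
    rw [Function.update_self, if_pos (Nat.succ_pos _), Function.update_idem,
      Nat.add_sub_cancel, Function.update_eq_self, prod_pow_update]
    have hpe : (∏ t, lam t ^ x t)
        = lam j ^ x j * ∏ t ∈ Finset.univ.erase j, lam t ^ x t := by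
      rw [← Finset.mul_prod_erase _ _ (Finset.mem_univ j)]
    rw [hpe, pow_succ]
    ring
  have hsupp : ∀ j : I, Function.support (h j) ⊆ {y : I → ℕ | 0 < y j} := by
    intro j y hy
    by_contra hy'
    simp only [Set.mem_setOf_eq] at hy'
    apply hy
    show (if 0 < y j then Phi μ Ka (Function.update y j (y j - 1)) else 0)
      * ∏ t, lam t ^ y t = 0
    rw [if_neg hy', zero_mul]
  have hh_sum : ∀ j, Summable (h j) := by
    intro j
    have h3 : Summable fun y : {y : I → ℕ | 0 < y j} => h j y.1 := by
      rw [← Equiv.summable_iff (succEquiv j)]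
      refine (hs.mul_left (lam j)).congr fun x => ?_
      exact (hcomp j x).symm
    rw [← Set.indicator_eq_self.2 (hsupp j)]
    exact summable_subtype_iff_indicator.1 h3
  have hstep : ∀ j : I, lam j * Gf μ Ka lam = ∑' y, h j y := by
    intro j
    calc lam j * Gf μ Ka lam
        = ∑' x, lam j * f x := tsum_mul_left.symm
      _ = ∑' x, h j ((succEquiv j x : {y : I → ℕ | 0 < y j}) : I → ℕ) :=
          tsum_congr fun x => (hcomp j x).symm
      _ = ∑' y : {y : I → ℕ | 0 < y j}, h j y.1 :=
          Equiv.tsum_eq (succEquiv j) (fun y : {y : I → ℕ | 0 < y j} => h j y.1)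
      _ = ∑' y, h j y := tsum_subtype_eq_of_support_subset (hsupp j)
  -- Λ(I)·G = ∑' x, M(𝒦(x)) f(x)
  have hT2 : (∑ j, lam j) * Gf μ Ka lam
      = ∑' x, (∑ k ∈ (Finset.univ.filter fun i => 0 < x i).biUnion Ka, μ k) * f x := by
    rw [Finset.sum_mul, Finset.sum_congr rfl (fun j _ => hstep j),
      ← Summable.tsum_finsetSum (fun j (_ : j ∈ Finset.univ) => hh_sum j)]
    apply tsum_congr
    intro y
    have e1 : ∑ j, h j y = (∑ j ∈ Finset.univ.filter (fun i => 0 < y i),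
        Phi μ Ka (Function.update y j (y j - 1))) * ∏ t, lam t ^ y t := by
      rw [Finset.sum_mul, Finset.sum_filter]
      refine Finset.sum_congr rfl fun j _ => ?_
      show (if 0 < y j then Phi μ Ka (Function.update y j (y j - 1)) else 0)
          * ∏ t, lam t ^ y t
        = if 0 < y j then Phi μ Ka (Function.update y j (y j - 1)) * ∏ t, lam t ^ y t else 0
      rw [ite_mul, zero_mul]
    rw [e1, Phi_rec μ hμ Ka hKa y, hf]
    ring
  linarith [hT1, hT2]

end Key

section Final
lemma algebra_final (A B li G G' : ℝ) (ha : 0 < A - B) (hc : 0 < A - (li + B)) (hG : 0 < G) :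
    G⁻¹ * G' = (1 - li / (A - B)) * ((A - B) * G') / ((A - (li + B)) * G) := by
  have h1 : A - B ≠ 0 := ha.ne'
  have h2 : A - (li + B) ≠ 0 := hc.ne'
  have h3 : G ≠ 0 := hG.ne'
  field_simp
  ring

set_option linter.unusedSectionVars false
set_option maxHeartbeats 1000000
variable {I K : Type} [Fintype I] [DecidableEq I] [DecidableEq K]

lemma one_le_Gf (μ : K → ℝ) (hμ : ∀ k, 0 ≤ μ k) (Ka : I → Finset K)
    (lam : I → ℝ) (hlam : ∀ j, 0 ≤ lam j)
    (hs : Summable fun x : I → ℕ => Phi μ Ka x * ∏ j, lam j ^ x j) :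
    1 ≤ Gf μ Ka lam := by
  have h0 : Phi μ Ka (fun _ => 0) * ∏ j, lam j ^ ((fun _ : I => 0) j) = 1 := by
    rw [Phi_zero]; simp
  calc (1:ℝ) = Phi μ Ka (fun _ => 0) * ∏ j, lam j ^ ((fun _ : I => 0) j) := h0.symm
    _ ≤ Gf μ Ka lam := Summable.le_tsum hs _ (fun x _ => mul_nonneg (Phi_nonneg μ hμ Ka x)
        (Finset.prod_nonneg fun j _ => pow_nonneg (hlam j) _))

lemma lamMinus_nonneg (Ka : I → Finset K) (lam : I → ℝ) (hlam : ∀ j, 0 ≤ lam j) (k : K)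
    (j : I) : 0 ≤ lamMinus Ka lam k j := by
  simp only [lamMinus]; split
  · exact le_refl 0
  · exact hlam j

lemma lamMinus_le (Ka : I → Finset K) (lam : I → ℝ) (hlam : ∀ j, 0 ≤ lam j) (k : K)
    (j : I) : lamMinus Ka lam k j ≤ lam j := by
  simp only [lamMinus]; split
  · exact hlam j
  · exact le_refl _

lemma lamMinus_update (Ka : I → Finset K) (lam : I → ℝ) (i : I) (k : K) :
    lamMinus Ka (Function.update lam i 0) k = lamMinusKI Ka lam k i := by
  funext j
  simp only [lamMinus, lamMinusKI]
  rcases eq_or_ne j i with rfl | hj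
  · simp
  · rw [Function.update_of_ne hj]
    by_cases hk : k ∈ Ka j <;> simp [hk, hj]

lemma tsum_zero_eq (μ : K → ℝ) (Ka : I → Finset K) (lam : I → ℝ) (i : I) :
    (∑' x : {x : I → ℕ // x i = 0}, Phi μ Ka x.1 * ∏ j, lam j ^ x.1 j)
      = Gf μ Ka (Function.update lam i 0) := by
  calc (∑' x : {x : I → ℕ // x i = 0}, Phi μ Ka x.1 * ∏ j, lam j ^ x.1 j)
      = ∑' x, Set.indicator {x : I → ℕ | x i = 0}
          (fun x => Phi μ Ka x * ∏ j, lam j ^ x j) x :=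
        tsum_subtype {x : I → ℕ | x i = 0} (fun x => Phi μ Ka x * ∏ j, lam j ^ x j)
    _ = ∑' x, Phi μ Ka x * ∏ j, (Function.update lam i 0 j) ^ x j := by
        apply tsum_congr
        intro x
        by_cases hx : x i = 0
        · rw [Set.indicator_of_mem (by exact hx : x ∈ {x : I → ℕ | x i = 0})]
          congr 1
          refine Finset.prod_congr rfl fun j _ => ?_
          rcases eq_or_ne j i with rfl | hj
          · rw [hx, pow_zero, pow_zero]
          · rw [Function.update_of_ne hj]
        · rw [Set.indicator_of_notMem (by exact hx : x ∉ {x : I → ℕ | x i = 0})]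
          have : (∏ j, (Function.update lam i 0 j) ^ x j) = 0 :=
            Finset.prod_eq_zero (Finset.mem_univ i)
              (by rw [Function.update_self]; exact zero_pow hx)
          rw [this, mul_zero]
    _ = Gf μ Ka (Function.update lam i 0) := rfl

end Final


/-- If `G(λ) < ∞`, the stationary probability `ψ_i` that class `i` is
idle satisfies `ψ_i = (1 − ρ_i) (∑_k μ_k/ψ_{|−k,i}) / (∑_k μ_k/ψ_{|−k})`, with
`ρ_i = λ_i / (M(K) − Λ(I∖{i}))`; in particular `M(K) − Λ(I∖{i}) > 0`. -/
theorem class_idle_probability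
    {I K : Type} [Fintype I] [DecidableEq I] [Nonempty I]
    [Fintype K] [DecidableEq K] [Nonempty K]
    (μ : K → ℝ) (hμ : ∀ k, 0 < μ k)
    (Ka : I → Finset K) (hKa : ∀ i, (Ka i).Nonempty) (hcov : ∀ k, ∃ i, k ∈ Ka i)
    (lam : I → ℝ) (hlam : ∀ i, 0 ≤ lam i) (i : I)
    (hG : Summable (fun x : I → ℕ => Phi μ Ka x * ∏ j, lam j ^ x j)) :
    0 < (∑ k, μ k) - ∑ j ∈ Finset.univ.erase i, lam j ∧
    (Gf μ Ka lam)⁻¹ *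
        (∑' x : {x : I → ℕ // x i = 0}, Phi μ Ka x.1 * ∏ j, lam j ^ x.1 j) =
      (1 - lam i / ((∑ k, μ k) - ∑ j ∈ Finset.univ.erase i, lam j)) *
        (∑ k, μ k / (Gf μ Ka (lamMinusKI Ka lam k i))⁻¹) /
        (∑ k, μ k / (Gf μ Ka (lamMinus Ka lam k))⁻¹) := by
  have hμ' : ∀ k, 0 ≤ μ k := fun k => (hμ k).le
  -- λ' = λ with class i removed
  have hl'0 : ∀ j, 0 ≤ Function.update lam i 0 j := by
    intro j
    rcases eq_or_ne j i with rfl | hj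
    · rw [Function.update_self]
    · rw [Function.update_of_ne hj]; exact hlam j
  have hl'le : ∀ j, Function.update lam i 0 j ≤ lam j := by
    intro j
    rcases eq_or_ne j i with rfl | hj
    · rw [Function.update_self]; exact hlam j
    · rw [Function.update_of_ne hj]
  have hs' : Summable (fun x : I → ℕ =>
      Phi μ Ka x * ∏ j, (Function.update lam i 0 j) ^ x j) :=
    summable_mono μ hμ' Ka lam _ hl'0 hl'le hG
  -- the two instances of the key identity
  have h1 := key_identity μ hμ Ka hKa lam hlam hG
  have h2 := key_identity μ hμ Ka hKa (Function.update lam i 0) hl'0 hs'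
  have hsum1 : ∑ j, lam j = lam i + ∑ j ∈ Finset.univ.erase i, lam j :=
    (Finset.add_sum_erase _ _ (Finset.mem_univ i)).symm
  have hsum2 : ∑ j, Function.update lam i 0 j = ∑ j ∈ Finset.univ.erase i, lam j := by
    rw [Finset.sum_update_of_mem (Finset.mem_univ i), zero_add, Finset.sdiff_singleton_eq_erase]
  rw [hsum1] at h1
  rw [hsum2] at h2
  simp only [lamMinus_update] at h2
  -- positivity facts
  have hGpos : 0 < Gf μ Ka lam :=
    lt_of_lt_of_le one_pos (one_le_Gf μ hμ' Ka lam hlam hG)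
  have hGk : ∀ k, 1 ≤ Gf μ Ka (lamMinus Ka lam k) := fun k =>
    one_le_Gf μ hμ' Ka _ (lamMinus_nonneg Ka lam hlam k)
      (summable_mono μ hμ' Ka lam _ (lamMinus_nonneg Ka lam hlam k)
        (lamMinus_le Ka lam hlam k) hG)
  have hS : 0 < ∑ k, μ k * Gf μ Ka (lamMinus Ka lam k) :=
    Finset.sum_pos (fun k _ => mul_pos (hμ k)
      (lt_of_lt_of_le one_pos (hGk k))) Finset.univ_nonempty
  have hpos : 0 < (∑ k, μ k) - (lam i + ∑ j ∈ Finset.univ.erase i, lam j) := by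
    by_contra hc
    push_neg at hc
    nlinarith [h1, hS, hGpos]
  have hABpos : 0 < (∑ k, μ k) - ∑ j ∈ Finset.univ.erase i, lam j := by
    have := hlam i; linarith
  refine ⟨hABpos, ?_⟩
  rw [tsum_zero_eq μ Ka lam i]
  simp only [div_eq_mul_inv, inv_inv]
  rw [← h1, ← h2]
  exact algebra_final _ _ _ _ _ hABpos hpos hGpos
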